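/- arXiv:math/0010126 — 5 statements merged into one kernel-verified Lean document; each statement's English description precedes it below -/
import Mathlib

section
/- In the free graded-commutative ℚ-algebra on generators x1, x2 (even degrees, cocycles) and y1, y2, y3 (odd degrees) with derivation d of degree +1 satisfying d(x1) = d(x2) = 0, d(y1) = x1^3·x2, d(y2) = x1^2·x2^2, d(y3) = x1·x2^3, the element (y1·x2 − x1·y2)·(y2·x2 − x1·y3) + x1^11 + x2^9 is a cocycle, i.e., d applied to it is zero. -/
/-- Example 5.1 of Arkowitz–Lupton: the prospective value of `d z` is a cocycle, i.e. `d² = 0`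
holds on `z`.  We work in a graded-commutative `ℚ`-algebra with grading `𝒜`, where `d` is a
degree `+1` derivation (graded Leibniz rule). -/
theorem stmt4 {A : Type*} [Ring A] [Algebra ℚ A]
    (𝒜 : ℕ → Submodule ℚ A)
    (hmul : ∀ m n : ℕ, ∀ a ∈ 𝒜 m, ∀ b ∈ 𝒜 n, a * b ∈ 𝒜 (m + n))
    (hcomm : ∀ m n : ℕ, ∀ a ∈ 𝒜 m, ∀ b ∈ 𝒜 n, a * b = ((-1 : ℚ) ^ (m * n)) • (b * a))
    (d : A →ₗ[ℚ] A)
    (hdeg : ∀ n : ℕ, ∀ a ∈ 𝒜 n, d a ∈ 𝒜 (n + 1))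
    (hLeib : ∀ m : ℕ, ∀ a ∈ 𝒜 m, ∀ b : A, d (a * b) = d a * b + ((-1 : ℚ) ^ m) • (a * d b))
    (x1 x2 y1 y2 y3 : A)
    (hx1 : x1 ∈ 𝒜 18) (hx2 : x2 ∈ 𝒜 22)
    (hy1 : y1 ∈ 𝒜 75) (hy2 : y2 ∈ 𝒜 79) (hy3 : y3 ∈ 𝒜 83)
    (hdx1 : d x1 = 0) (hdx2 : d x2 = 0)
    (hdy1 : d y1 = x1 ^ 3 * x2) (hdy2 : d y2 = x1 ^ 2 * x2 ^ 2) (hdy3 : d y3 = x1 * x2 ^ 3) :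
    d ((y1 * x2 - x1 * y2) * (y2 * x2 - x1 * y3) + x1 ^ 11 + x2 ^ 9) = 0 := by
  have hx1pow : ∀ n : ℕ, d (x1 ^ (n + 1)) = 0 := by
    intro n
    induction n with
    | zero => simpa using hdx1
    | succ k ih =>
      rw [pow_succ', hLeib 18 x1 hx1, hdx1, ih]
      norm_num
  have hx2pow : ∀ n : ℕ, d (x2 ^ (n + 1)) = 0 := by
    intro n
    induction n with
    | zero => simpa using hdx2
    | succ k ih =>
      rw [pow_succ', hLeib 22 x2 hx2, hdx2, ih]
      norm_num
  have hdu : d (y1 * x2 - x1 * y2) = 0 := by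
    rw [map_sub, hLeib 75 y1 hy1 x2, hLeib 18 x1 hx1 y2, hdx1, hdx2, hdy1, hdy2]
    simp only [mul_zero, smul_zero, add_zero, zero_mul, zero_add]
    norm_num
    rw [sub_eq_zero, mul_assoc, ← pow_two, ← mul_assoc, ← pow_succ' x1 2]
  have hdv : d (y2 * x2 - x1 * y3) = 0 := by
    rw [map_sub, hLeib 79 y2 hy2 x2, hLeib 18 x1 hx1 y3, hdx1, hdx2, hdy2, hdy3]
    simp only [mul_zero, smul_zero, add_zero, zero_mul, zero_add]
    norm_num
    rw [sub_eq_zero, mul_assoc, ← pow_succ x2 2, ← mul_assoc, ← pow_two]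
  have hu : y1 * x2 - x1 * y2 ∈ 𝒜 97 := by
    have h1 := hmul 75 22 y1 hy1 x2 hx2
    have h2 := hmul 18 79 x1 hx1 y2 hy2
    exact sub_mem h1 h2
  rw [map_add, map_add, hLeib 97 _ hu, hdu, hdv, hx1pow 10, hx2pow 8]
  simp
end

section
/- In the minimal algebra of Example 5.2, d(z·x2 − y1·y2·y3·x1^3 − y1·x1^12) = x2^13, hence the cohomology class of x2 is nilpotent. -/
/-- Example 5.2 of Arkowitz–Lupton: `d(z·x2 − y1·y2·y3·x1³ − y1·x1¹²) = x2¹³`, hence the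
cohomology class of `x2` is nilpotent (a power of `x2` is a coboundary). -/
theorem stmt6 {A : Type*} [Ring A] [Algebra ℚ A]
    (𝒜 : ℕ → Submodule ℚ A)
    (hmul : ∀ m n : ℕ, ∀ a ∈ 𝒜 m, ∀ b ∈ 𝒜 n, a * b ∈ 𝒜 (m + n))
    (hcomm : ∀ m n : ℕ, ∀ a ∈ 𝒜 m, ∀ b ∈ 𝒜 n, a * b = ((-1 : ℚ) ^ (m * n)) • (b * a))
    (d : A →ₗ[ℚ] A)
    (hdeg : ∀ n : ℕ, ∀ a ∈ 𝒜 n, d a ∈ 𝒜 (n + 1))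
    (hLeib : ∀ m : ℕ, ∀ a ∈ 𝒜 m, ∀ b : A, d (a * b) = d a * b + ((-1 : ℚ) ^ m) • (a * d b))
    (x1 x2 y1 y2 y3 z : A)
    (hx1 : x1 ∈ 𝒜 8) (hx2 : x2 ∈ 𝒜 10)
    (hy1 : y1 ∈ 𝒜 33) (hy2 : y2 ∈ 𝒜 35) (hy3 : y3 ∈ 𝒜 37) (hz : z ∈ 𝒜 119)
    (hdx1 : d x1 = 0) (hdx2 : d x2 = 0)
    (hdy1 : d y1 = x1 ^ 3 * x2) (hdy2 : d y2 = x1 ^ 2 * x2 ^ 2) (hdy3 : d y3 = x1 * x2 ^ 3)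
    (hdz : d z = y1 * y2 * x1 ^ 4 * x2 ^ 2 - y1 * y3 * x1 ^ 5 * x2 + y2 * y3 * x1 ^ 6
        + x1 ^ 15 + x2 ^ 12) :
    d (z * x2 - y1 * y2 * y3 * x1 ^ 3 - y1 * x1 ^ 12) = x2 ^ 13 ∧
      ∃ (n : ℕ) (u : A), 0 < n ∧ x2 ^ n = d u := by
  -- x1 commutes with every graded element
  have key1 : ∀ (n : ℕ) (b : A), b ∈ 𝒜 n → x1 * b = b * x1 := by
    intro n b hb
    have h := hcomm 8 n x1 hx1 b hb
    have hs : ((-1 : ℚ)) ^ (8 * n) = 1 := by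
      rw [pow_mul]; norm_num
    rw [hs, one_smul] at h
    exact h
  have key2 : ∀ (n : ℕ) (b : A), b ∈ 𝒜 n → x2 * b = b * x2 := by
    intro n b hb
    have h := hcomm 10 n x2 hx2 b hb
    have hs : ((-1 : ℚ)) ^ (10 * n) = 1 := by
      rw [pow_mul]; norm_num
    rw [hs, one_smul] at h
    exact h
  -- commutation rules, plain and reassociated
  have c21 : x2 * x1 = x1 * x2 := (key2 8 x1 hx1).symm ▸ (key2 8 x1 hx1)
  have c21' : ∀ t : A, x2 * (x1 * t) = x1 * (x2 * t) := by
    intro t; rw [← mul_assoc, key2 8 x1 hx1, mul_assoc]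
  have c1y1 : x1 * y1 = y1 * x1 := key1 33 y1 hy1
  have c1y2 : x1 * y2 = y2 * x1 := key1 35 y2 hy2
  have c1y3 : x1 * y3 = y3 * x1 := key1 37 y3 hy3
  have c2y1 : x2 * y1 = y1 * x2 := key2 33 y1 hy1
  have c2y2 : x2 * y2 = y2 * x2 := key2 35 y2 hy2
  have c2y3 : x2 * y3 = y3 * x2 := key2 37 y3 hy3
  have c1y1' : ∀ t : A, x1 * (y1 * t) = y1 * (x1 * t) := by
    intro t; rw [← mul_assoc, c1y1, mul_assoc]
  have c1y2' : ∀ t : A, x1 * (y2 * t) = y2 * (x1 * t) := by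
    intro t; rw [← mul_assoc, c1y2, mul_assoc]
  have c1y3' : ∀ t : A, x1 * (y3 * t) = y3 * (x1 * t) := by
    intro t; rw [← mul_assoc, c1y3, mul_assoc]
  have c2y1' : ∀ t : A, x2 * (y1 * t) = y1 * (x2 * t) := by
    intro t; rw [← mul_assoc, c2y1, mul_assoc]
  have c2y2' : ∀ t : A, x2 * (y2 * t) = y2 * (x2 * t) := by
    intro t; rw [← mul_assoc, c2y2, mul_assoc]
  have c2y3' : ∀ t : A, x2 * (y3 * t) = y3 * (x2 * t) := by
    intro t; rw [← mul_assoc, c2y3, mul_assoc]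
  -- derivation kills x1 (and its powers) on the left
  have hdx1mul : ∀ b : A, d (x1 * b) = x1 * d b := by
    intro b
    rw [hLeib 8 x1 hx1 b, hdx1]
    norm_num
  have hdpow1 : ∀ n : ℕ, d (x1 ^ (n + 1)) = 0 := by
    intro n
    induction n with
    | zero => simpa using hdx1
    | succ k ih =>
        rw [pow_succ']
        rw [hdx1mul, ih, mul_zero]
  have hd3 : d (x1 ^ 3) = 0 := hdpow1 2
  have hd12 : d (x1 ^ 12) = 0 := hdpow1 11
  -- memberships
  have m68 : y1 * y2 ∈ 𝒜 68 := by
    have := hmul 33 35 y1 hy1 y2 hy2; norm_num at this; exact this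
  have m105 : y1 * y2 * y3 ∈ 𝒜 105 := by
    have := hmul 68 37 (y1 * y2) m68 y3 hy3; norm_num at this; exact this
  -- pieces of the computation
  have h1 : d (z * x2) = d z * x2 := by
    rw [hLeib 119 z hz x2, hdx2, mul_zero, smul_zero, add_zero]
  have h2 : d (y1 * x1 ^ 12) = x1 ^ 3 * x2 * x1 ^ 12 := by
    rw [hLeib 33 y1 hy1 (x1 ^ 12), hd12, mul_zero, smul_zero, add_zero, hdy1]
  have h3 : d (y1 * y2) = x1 ^ 3 * x2 * y2 - y1 * (x1 ^ 2 * x2 ^ 2) := by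
    rw [hLeib 33 y1 hy1 y2, hdy1, hdy2]
    have hs : ((-1 : ℚ)) ^ 33 = -1 := by norm_num
    rw [hs, neg_one_smul, ← sub_eq_add_neg]
  have h4 : d (y1 * y2 * y3)
      = (x1 ^ 3 * x2 * y2 - y1 * (x1 ^ 2 * x2 ^ 2)) * y3 + y1 * y2 * (x1 * x2 ^ 3) := by
    rw [hLeib 68 (y1 * y2) m68 y3, hdy3, h3]
    have hs : ((-1 : ℚ)) ^ 68 = 1 := by norm_num
    rw [hs, one_smul]
  have h5 : d (y1 * y2 * y3 * x1 ^ 3)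
      = ((x1 ^ 3 * x2 * y2 - y1 * (x1 ^ 2 * x2 ^ 2)) * y3 + y1 * y2 * (x1 * x2 ^ 3)) * x1 ^ 3 := by
    rw [hLeib 105 (y1 * y2 * y3) m105 (x1 ^ 3), hd3, mul_zero, smul_zero, add_zero, h4]
  have main : d (z * x2 - y1 * y2 * y3 * x1 ^ 3 - y1 * x1 ^ 12) = x2 ^ 13 := by
    rw [map_sub, map_sub, h1, h2, h5, hdz]
    simp only [pow_succ, pow_zero, one_mul, sub_mul, add_mul, mul_sub, mul_add, mul_assoc,
      c21, c21', c1y1, c1y2, c1y3, c2y1, c2y2, c2y3,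
      c1y1', c1y2', c1y3', c2y1', c2y2', c2y3']
    abel
  exact ⟨main, 13, z * x2 - y1 * y2 * y3 * x1 ^ 3 - y1 * x1 ^ 12, by norm_num, main.symm⟩
end

section
/- Let M = ΛV be a connected free graded-commutative DG algebra over ℚ whose underlying vector space of generators V carries a second (weight) grading V = ⊕_i V_i making (M, d) a bigraded DG algebra with all generators of positive total degree plus weight (totally positive). Then for each nonzero rational λ there is a DG algebra automorphism φ_λ of M with φ_λ(v) = λ^{|v|+i}·v for v ∈ V_i, and for each cohomology class x of cohomological degree n and weight i, φ_λ^*(x) = λ^{n+i}·x. -/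
noncomputable def auxPhi {A : Type*} [Ring A] [Algebra ℚ A]
    (𝒜 : ℤ → ℤ → Submodule ℚ A)
    (hinternal : DirectSum.IsInternal (fun p : ℤ × ℤ => 𝒜 p.1 p.2))
    (c : ℚ) : A →ₗ[ℚ] A :=
  (DirectSum.toModule ℚ (ℤ × ℤ) A fun p => (c ^ (p.1 + p.2)) • (𝒜 p.1 p.2).subtype) ∘ₗ
    (LinearEquiv.ofBijective (DirectSum.coeLinearMap fun p : ℤ × ℤ => 𝒜 p.1 p.2)
      hinternal).symm.toLinearMap

theorem auxPhi_apply {A : Type*} [Ring A] [Algebra ℚ A]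
    (𝒜 : ℤ → ℤ → Submodule ℚ A)
    (hinternal : DirectSum.IsInternal (fun p : ℤ × ℤ => 𝒜 p.1 p.2))
    (c : ℚ) (n i : ℤ) (a : A) (ha : a ∈ 𝒜 n i) :
    auxPhi 𝒜 hinternal c a = c ^ (n + i) • a := by
  set e := LinearEquiv.ofBijective (DirectSum.coeLinearMap fun p : ℤ × ℤ => 𝒜 p.1 p.2) hinternal
  have h1 : e.symm a = DirectSum.lof ℚ (ℤ × ℤ) (fun p => 𝒜 p.1 p.2) (n, i) ⟨a, ha⟩ := by
    rw [LinearEquiv.symm_apply_eq]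
    have : e ((DirectSum.lof ℚ (ℤ × ℤ) (fun p => 𝒜 p.1 p.2) (n, i)) ⟨a, ha⟩)
        = (DirectSum.coeLinearMap fun p : ℤ × ℤ => 𝒜 p.1 p.2)
          ((DirectSum.lof ℚ (ℤ × ℤ) (fun p => 𝒜 p.1 p.2) (n, i)) ⟨a, ha⟩) := rfl
    rw [this, DirectSum.lof_eq_of, DirectSum.coeLinearMap_of]
  show (DirectSum.toModule ℚ (ℤ × ℤ) A fun p => (c ^ (p.1 + p.2)) • (𝒜 p.1 p.2).subtype)
      (e.symm a) = _
  rw [h1, DirectSum.toModule_lof]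
  rfl

theorem auxPhi_ext {A : Type*} [Ring A] [Algebra ℚ A]
    (𝒜 : ℤ → ℤ → Submodule ℚ A)
    (hinternal : DirectSum.IsInternal (fun p : ℤ × ℤ => 𝒜 p.1 p.2))
    {P : A → Prop} (h0 : P 0) (hadd : ∀ x y, P x → P y → P (x + y))
    (hhom : ∀ n i : ℤ, ∀ a ∈ 𝒜 n i, P a) : ∀ a : A, P a := by
  intro a
  have ha : a ∈ (⊤ : Submodule ℚ A) := trivial
  rw [← hinternal.submodule_iSup_eq_top] at ha
  exact Submodule.iSup_induction (motive := P) (fun p : ℤ × ℤ => 𝒜 p.1 p.2) ha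
    (fun p x hx => hhom p.1 p.2 x hx) h0 hadd


/-- Lemma 4.5 of Arkowitz–Lupton: a totally positive bigraded DG algebra (here an abstract
`ℚ`-algebra `A` with bigrading `𝒜 n i`, `n` the cohomological degree and `i` the weight/second
degree, `d` of bidegree `(+1, −1)`) admits, for each `λ ≠ 0` in `ℚ`, a DG algebra automorphism
`φ_λ` with `φ_λ(v) = λ^{n+i} • v` on `𝒜 n i`; on cohomology, `φ_λ^*` multiplies a class of
degree `n` and weight `i` by `λ^{n+i}`. -/
theorem stmt7 {A : Type*} [Ring A] [Algebra ℚ A]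
    (𝒜 : ℤ → ℤ → Submodule ℚ A)
    (hinternal : DirectSum.IsInternal (fun p : ℤ × ℤ => 𝒜 p.1 p.2))
    (hone : (1 : A) ∈ 𝒜 0 0)
    (hmul : ∀ n i m j : ℤ, ∀ a ∈ 𝒜 n i, ∀ b ∈ 𝒜 m j, a * b ∈ 𝒜 (n + m) (i + j))
    (d : A →ₗ[ℚ] A)
    (hd : ∀ n i : ℤ, ∀ a ∈ 𝒜 n i, d a ∈ 𝒜 (n + 1) (i - 1))
    (htotpos : ∀ n i : ℤ, 𝒜 n i ≠ ⊥ → 0 < n + i ∨ (n = 0 ∧ i = 0))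
    (l : ℚ) (hl : l ≠ 0) :
    ∃ φ : A →ₐ[ℚ] A, Function.Bijective φ ∧ (∀ a : A, φ (d a) = d (φ a)) ∧
      (∀ n i : ℤ, ∀ a ∈ 𝒜 n i, φ a = l ^ (n + i) • a) ∧
      (∀ n i : ℤ, ∀ a ∈ 𝒜 n i, d a = 0 → ∃ b : A, φ a - l ^ (n + i) • a = d b) := by
  set Φ : A →ₗ[ℚ] A := auxPhi 𝒜 hinternal l with hΦ
  set Ψ : A →ₗ[ℚ] A := auxPhi 𝒜 hinternal l⁻¹ with hΨ
  have key : ∀ n i : ℤ, ∀ a ∈ 𝒜 n i, Φ a = l ^ (n + i) • a :=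
    fun n i a ha => auxPhi_apply 𝒜 hinternal l n i a ha
  have keyΨ : ∀ n i : ℤ, ∀ a ∈ 𝒜 n i, Ψ a = (l⁻¹) ^ (n + i) • a :=
    fun n i a ha => auxPhi_apply 𝒜 hinternal l⁻¹ n i a ha
  -- multiplicativity
  have hmul1 : ∀ n i : ℤ, ∀ a ∈ 𝒜 n i, ∀ b : A, Φ (a * b) = Φ a * Φ b := by
    intro n i a ha
    refine auxPhi_ext 𝒜 hinternal ?_ ?_ ?_
    · simp
    · intro x y hx hy
      simp [mul_add, map_add, hx, hy]
    · intro m j b hb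
      rw [key _ _ _ (hmul n i m j a ha b hb), key n i a ha, key m j b hb,
        smul_mul_smul_comm, ← zpow_add₀ hl]
      ring_nf
  have hmul2 : ∀ b a : A, Φ (a * b) = Φ a * Φ b := fun b =>
    auxPhi_ext 𝒜 hinternal (P := fun a => Φ (a * b) = Φ a * Φ b)
      (by simp) (fun x y hx hy => by simp [add_mul, map_add, hx, hy])
      (fun n i a ha => hmul1 n i a ha b)
  have hone' : Φ 1 = 1 := by
    rw [key 0 0 1 hone]; norm_num
  set φ : A →ₐ[ℚ] A := AlgHom.ofLinearMap Φ hone' (fun a b => hmul2 b a) with hφ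
  have φeq : ∀ a : A, φ a = Φ a := fun a => rfl
  -- inverse
  have hinv1 : ∀ a : A, Φ (Ψ a) = a := by
    refine auxPhi_ext 𝒜 hinternal (by simp) (fun x y hx hy => by simp [map_add, hx, hy]) ?_
    intro n i a ha
    rw [keyΨ n i a ha, map_smul, key n i a ha, smul_smul, inv_zpow,
      inv_mul_cancel₀ (zpow_ne_zero _ hl), one_smul]
  have hinv2 : ∀ a : A, Ψ (Φ a) = a := by
    refine auxPhi_ext 𝒜 hinternal (by simp) (fun x y hx hy => by simp [map_add, hx, hy]) ?_
    intro n i a ha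
    rw [key n i a ha, map_smul, keyΨ n i a ha, smul_smul, inv_zpow,
      mul_inv_cancel₀ (zpow_ne_zero _ hl), one_smul]
  have hbij : Function.Bijective φ :=
    Function.bijective_iff_has_inverse.mpr ⟨Ψ, hinv2, hinv1⟩
  -- commutes with d
  have hcomm : ∀ a : A, Φ (d a) = d (Φ a) := by
    refine auxPhi_ext 𝒜 hinternal (by simp) (fun x y hx hy => by simp [map_add, hx, hy]) ?_
    intro n i a ha
    rw [key n i a ha, key (n + 1) (i - 1) (d a) (hd n i a ha), map_smul]
    congr 1
    ring_nf
  refine ⟨φ, hbij, hcomm, key, ?_⟩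
  intro n i a ha _
  exact ⟨0, by rw [φeq, key n i a ha, sub_self, map_zero]⟩
end

section
/- Suppose f, g : M → N are DG algebra maps from a free graded-commutative DG algebra M = ΛV to a DG algebra N, H : ΛV_0^I → N is a homotopy from f|ΛV_0 to g|ΛV_0 (where V = V_0 ⊕ V_1 is an obstruction decomposition, i.e., d(V) ⊆ ΛV_0), and w ∈ V_1. Then the element f(w) + H(α(w) − w − ŵ) − g(w) of N is a cocycle. -/
/-- The obstruction cocycle is well-defined (Definition 2.4 of Arkowitz–Lupton).  We work
inside the cylinder `I = ΛV^I`: `dI` is its differential, `α` the exponential DG automorphism,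
`M0` the subalgebra `ΛV_0`, `f, g, H` DG algebra maps to `N` with `H` a homotopy from `f` to `g`
on `ΛV_0` (i.e. `H = f` and `H∘α = g` on `M0`).  If `w ∈ V_1` has `dI w ∈ ΛV_0` (obstruction
decomposition) and `what = ŵ` is a cocycle, then `f(w) + H(α(w) − w − ŵ) − g(w)` is a cocycle
of `N`. -/
theorem stmt14 {I N : Type*} [Ring I] [Algebra ℚ I] [Ring N] [Algebra ℚ N]
    (dI : I →ₗ[ℚ] I) (dN : N →ₗ[ℚ] N)
    (hdI : ∀ x : I, dI (dI x) = 0) (hdN : ∀ x : N, dN (dN x) = 0)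
    (f g H : I →ₐ[ℚ] N) (α : I →ₐ[ℚ] I)
    (hf : ∀ x : I, f (dI x) = dN (f x))
    (hg : ∀ x : I, g (dI x) = dN (g x))
    (hH : ∀ x : I, H (dI x) = dN (H x))
    (hα : ∀ x : I, α (dI x) = dI (α x))
    (M0 : Subalgebra ℚ I)
    (hHf : ∀ x ∈ M0, H x = f x)
    (hHg : ∀ x ∈ M0, H (α x) = g x)
    (w what : I) (hdw : dI w ∈ M0) (hwhat : dI what = 0) :
    dN (f w + H (α w - w - what) - g w) = 0 := by
  have h1 : dN (H (α w - w - what)) = g (dI w) - f (dI w) := by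
    rw [← hH, map_sub, map_sub, map_sub, map_sub, hwhat, ← hα,
      hHg _ hdw, hHf _ hdw, map_zero]
    abel
  rw [map_sub, map_add, ← hf, ← hg, h1]
  abel
end

section
/- Let a1, a2, c ∈ ℚ satisfy a1^15 = c, a2^12 = c, and c = a1^9·a2^5. Then either a1 = a2 = c = 0, or a1 = a2 = c = 1. -/
theorem stmt18 (a1 a2 c : ℚ) (h1 : a1^15 = c) (h2 : a2^12 = c) (h3 : c = a1^9 * a2^5) :
    (a1 = 0 ∧ a2 = 0 ∧ c = 0) ∨ (a1 = 1 ∧ a2 = 1 ∧ c = 1) := by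
  by_cases h0 : a1 = 0
  · left
    subst h0
    simp at h1
    refine ⟨rfl, ?_, h1.symm⟩
    have : a2 ^ 12 = 0 := h2.trans h1.symm
    exact pow_eq_zero_iff (by norm_num) |>.mp this
  · right
    -- a1^6 = a2^5
    have key : a1 ^ 6 = a2 ^ 5 := by
      have h9 : a1 ^ 9 ≠ 0 := pow_ne_zero _ h0
      have : a1 ^ 9 * a1 ^ 6 = a1 ^ 9 * a2 ^ 5 := by
        rw [← pow_add]; norm_num; rw [h1, h3]
      exact mul_left_cancel₀ h9 this
    -- a1^75 = a1^72
    have h75 : a1 ^ 75 = a1 ^ 72 := by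
      have e1 : a1 ^ 72 = a2 ^ 60 := by
        calc a1 ^ 72 = (a1 ^ 6) ^ 12 := by ring
        _ = (a2 ^ 5) ^ 12 := by rw [key]
        _ = a2 ^ 60 := by ring
      have e2 : a1 ^ 75 = a2 ^ 60 := by
        calc a1 ^ 75 = (a1 ^ 15) ^ 5 := by ring
        _ = (a2 ^ 12) ^ 5 := by rw [h1, ← h2]
        _ = a2 ^ 60 := by ring
      rw [e1, ← e2]
    have h3' : a1 ^ 3 = 1 := by
      have h72 : a1 ^ 72 ≠ 0 := pow_ne_zero _ h0
      have : a1 ^ 72 * a1 ^ 3 = a1 ^ 72 * 1 := by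
        rw [mul_one, ← pow_add]; norm_num; exact h75
      exact mul_left_cancel₀ h72 this
    have ha1 : a1 = 1 := by
      have factored : (a1 - 1) * (a1 ^ 2 + a1 + 1) = 0 := by linear_combination h3' - 1
      have pos : a1 ^ 2 + a1 + 1 > 0 := by nlinarith [sq_nonneg (a1 + 1), sq_nonneg a1]
      rcases mul_eq_zero.mp factored with h | h
      · linarith
      · linarith
    subst ha1
    simp at key
    have ha2 : a2 = 1 := by
      have factored : (a2 - 1) * (a2 ^ 4 + a2 ^ 3 + a2 ^ 2 + a2 + 1) = 0 := by
        linear_combination -key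
      have pos : a2 ^ 4 + a2 ^ 3 + a2 ^ 2 + a2 + 1 > 0 := by
        nlinarith [sq_nonneg (a2 ^ 2 + a2), sq_nonneg (a2 + 1), sq_nonneg a2, sq_nonneg (a2 ^ 2 - 1)]
      rcases mul_eq_zero.mp factored with h | h
      · linarith
      · linarith
    subst ha2
    simp at h1
    exact ⟨rfl, rfl, h1.symm⟩
end
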